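/- The sets Σ_s^r(λ) and Σ_{s'}^{r'}(λ) are pairwise disjoint for (s, r) ≠ (s', r'), for any λ ∈ P⁺(1). -/

import Mathlib

open Finset

abbrev Wt (n : ℕ) := Fin n → ℤ

def omegaW (n : ℕ) (k : ℕ) : Wt n := fun i => if (i : ℕ) + 1 = k then 1 else 0

def alphaW (n : ℕ) (k : ℕ) : Wt n := fun i =>
  if (i : ℕ) + 1 = k then 2 else if (i : ℕ) + 2 = k ∨ (i : ℕ) = k then -1 else 0

def coeffW (n : ℕ) (l : Wt n) (k : ℕ) : ℤ := ∑ i : Fin n, if (i : ℕ) + 1 = k then l i else 0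

def IsDom (n : ℕ) (l : Wt n) : Prop := ∀ i, 0 ≤ l i

def IsDomOne (n : ℕ) (l : Wt n) : Prop := ∀ i, 0 ≤ l i ∧ l i ≤ 1

def InQplus (n : ℕ) (w : Wt n) : Prop :=
  ∃ c : ℕ → ℕ, w = ∑ k ∈ Finset.Icc 1 n, (c k : ℤ) • alphaW n k

def InQ (n : ℕ) (w : Wt n) : Prop :=
  ∃ c : ℕ → ℤ, w = ∑ k ∈ Finset.Icc 1 n, c k • alphaW n k

noncomputable def formW (n : ℕ) (x y : Wt n) : ℚ :=
  ∑ i : Fin n, ∑ j : Fin n, (x i : ℚ) * (y j : ℚ) *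
    ((((min i.val j.val : ℕ) : ℚ) + 1) * ((n : ℚ) + 1 - (((max i.val j.val : ℕ) : ℚ) + 1)) / ((n : ℚ) + 1))

noncomputable def qpow (r : ℚ) : RatFunc ℚ := if r.den = 1 then RatFunc.X ^ r.num else 0

noncomputable def qint (k : ℤ) : RatFunc ℚ := (1 - RatFunc.X ^ k) / (1 - RatFunc.X)

noncomputable def qbinom (m r : ℤ) : RatFunc ℚ :=
  if 0 ≤ r ∧ r ≤ m then ∏ k ∈ Finset.range r.toNat, qint (m - (k : ℤ)) / qint ((k : ℤ) + 1) else 0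

noncomputable def qbinomQ (m r : ℚ) : RatFunc ℚ :=
  if m.den = 1 ∧ r.den = 1 then qbinom m.num r.num else 0

def alphaSumW (n m p : ℕ) : Wt n := ∑ k ∈ Finset.Icc m p, alphaW n k

def htW (n : ℕ) (l : Wt n) : ℤ := ∑ i, l i

/-- `IsMinIdx n l m` : m = min l = min{ i : l(h_i) > 0 }. -/
def IsMinIdx (n : ℕ) (l : Wt n) (m : ℕ) : Prop :=
  0 < coeffW n l m ∧ ∀ k < m, coeffW n l k = 0

mutual
/-- μ ∈ Σ_s⁰(λ) in the recursive definition of the paper. -/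
inductive Sig0 (n : ℕ) : ℕ → Wt n → Wt n → Prop where
  | base (l : Wt n) : Sig0 n 0 l l
  | step0 (s m : ℕ) (l mu : Wt n) (hs : 0 < s) (hht : 2 ≤ htW n l)
      (hm : IsMinIdx n l m) (h : Sig0 n s (l - omegaW n m) mu) :
      Sig0 n s l (omegaW n m + mu)
  | step1 (s m : ℕ) (l mu : Wt n) (hs : 0 < s) (hht : 2 ≤ htW n l)
      (hm : IsMinIdx n l m) (h : Sig1 n s (l - omegaW n m) mu) :
      Sig0 n s l (omegaW n m + mu)

/-- μ ∈ Σ_s¹(λ) in the recursive definition of the paper. -/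
inductive Sig1 (n : ℕ) : ℕ → Wt n → Wt n → Prop where
  | caseA (s m p : ℕ) (l mu : Wt n) (hht : 2 ≤ htW n l) (hm : IsMinIdx n l m)
      (hp : IsMinIdx n (l - omegaW n m) p) (h0 : coeffW n l (p + 1) = 0)
      (h : Sig0 n s (l - alphaSumW n m p) mu) : Sig1 n (s + 1) l mu
  | caseB1 (m p : ℕ) (l : Wt n) (hht : 2 ≤ htW n l) (hm : IsMinIdx n l m)
      (hp : IsMinIdx n (l - omegaW n m) p) (h1 : coeffW n l (p + 1) = 1) :
      Sig1 n 1 l (l - alphaSumW n m p)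
  | caseB2 (s m p : ℕ) (l mu : Wt n) (hht : 2 ≤ htW n l) (hm : IsMinIdx n l m)
      (hp : IsMinIdx n (l - omegaW n m) p) (h1 : coeffW n l (p + 1) = 1)
      (h : Sig0 n (s + 1) (l - 2 • omegaW n (p + 1) - alphaSumW n m p) mu) :
      Sig1 n (s + 2) l (2 • omegaW n (p + 1) + mu)
  | caseB3 (s m p : ℕ) (l mu : Wt n) (hht : 2 ≤ htW n l) (hm : IsMinIdx n l m)
      (hp : IsMinIdx n (l - omegaW n m) p) (h1 : coeffW n l (p + 1) = 1)
      (h : Sig0 n s (l - 2 • omegaW n (p + 1) - alphaSumW n m p) mu) :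
      Sig1 n (s + 2) l (2 • omegaW n (p + 1) - alphaW n (p + 1) + mu)
end
namespace SigAux
variable {n : ℕ}

lemma coeffW_fin (l : Wt n) (i : Fin n) : coeffW n l ((i : ℕ) + 1) = l i := by
  unfold coeffW
  rw [Finset.sum_eq_single i]
  · simp
  · intro j _ hj
    have : ¬((j : ℕ) + 1 = (i : ℕ) + 1) := by
      intro h; exact hj (Fin.ext (by omega))
    rw [if_neg this]
  · simp

lemma coeffW_eq (l : Wt n) (k : ℕ) (h1 : 1 ≤ k) (h2 : k ≤ n) :
    coeffW n l k = l ⟨k - 1, by omega⟩ := by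
  have h := coeffW_fin l ⟨k - 1, by omega⟩
  have : (k - 1) + 1 = k := by omega
  rw [this] at h
  exact h

lemma coeffW_out (l : Wt n) (k : ℕ) (h : ¬(1 ≤ k ∧ k ≤ n)) : coeffW n l k = 0 := by
  unfold coeffW
  apply Finset.sum_eq_zero
  intro i _
  have hi := i.isLt
  have : ¬((i : ℕ) + 1 = k) := by omega
  simp [this]

lemma coeff_ne_range {l : Wt n} {k : ℕ} (h : coeffW n l k ≠ 0) : 1 ≤ k ∧ k ≤ n := by
  by_contra hc
  exact h (coeffW_out l k hc)

lemma coeffW_zero (k : ℕ) : coeffW n (0 : Wt n) k = 0 := by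
  unfold coeffW; simp

lemma coeffW_sub (x y : Wt n) (k : ℕ) :
    coeffW n (x - y) k = coeffW n x k - coeffW n y k := by
  unfold coeffW
  rw [← Finset.sum_sub_distrib]
  apply Finset.sum_congr rfl
  intro i _
  by_cases h : (i : ℕ) + 1 = k <;> simp [h]

lemma coeffW_add (x y : Wt n) (k : ℕ) :
    coeffW n (x + y) k = coeffW n x k + coeffW n y k := by
  unfold coeffW
  rw [← Finset.sum_add_distrib]
  apply Finset.sum_congr rfl
  intro i _
  by_cases h : (i : ℕ) + 1 = k <;> simp [h]

lemma coeffW_smul (z : ℤ) (x : Wt n) (k : ℕ) :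
    coeffW n (z • x) k = z * coeffW n x k := by
  unfold coeffW
  rw [Finset.mul_sum]
  apply Finset.sum_congr rfl
  intro i _
  by_cases h : (i : ℕ) + 1 = k <;> simp [h]

lemma coeffW_finsum {α : Type*} (s : Finset α) (f : α → Wt n) (k : ℕ) :
    coeffW n (∑ j ∈ s, f j) k = ∑ j ∈ s, coeffW n (f j) k := by
  classical
  induction s using Finset.cons_induction with
  | empty => simp [coeffW_zero]
  | cons a s ha ih =>
    rw [Finset.sum_cons, Finset.sum_cons, coeffW_add, ih]

lemma coeff_omega (m k : ℕ) :
    coeffW n (omegaW n m) k = if k = m ∧ 1 ≤ m ∧ m ≤ n then 1 else 0 := by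
  by_cases h : 1 ≤ k ∧ k ≤ n
  · rw [coeffW_eq _ _ h.1 h.2]
    show (if (k - 1) + 1 = m then (1:ℤ) else 0) = _
    split_ifs <;> omega
  · rw [coeffW_out _ _ h]
    split_ifs with h' <;> omega

lemma coeff_alpha (j k : ℕ) (h1 : 1 ≤ k) (h2 : k ≤ n) :
    coeffW n (alphaW n j) k = if k = j then 2 else if k + 1 = j ∨ k - 1 = j then -1 else 0 := by
  rw [coeffW_eq _ _ h1 h2]
  show (if (k-1) + 1 = j then (2:ℤ) else if (k-1) + 2 = j ∨ (k-1) = j then -1 else 0) = _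
  split_ifs <;> omega

end SigAux
namespace SigAux

def sumA (n : ℕ) (c : ℕ → ℤ) : Wt n := ∑ k ∈ Finset.Icc 1 n, c k • alphaW n k

lemma sumA_zero : sumA n (fun _ => 0) = (0 : Wt n) := by
  unfold sumA; simp

lemma sumA_add (c d : ℕ → ℤ) :
    sumA n (fun k => c k + d k) = sumA n c + sumA n d := by
  unfold sumA
  rw [← Finset.sum_add_distrib]
  apply Finset.sum_congr rfl
  intro k _
  rw [add_smul]

lemma sumA_single (j : ℕ) (h1 : 1 ≤ j) (h2 : j ≤ n) :
    sumA n (fun k => if k = j then (1:ℤ) else 0) = alphaW n j := by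
  unfold sumA
  rw [Finset.sum_eq_single j]
  · simp
  · intro k _ hk; simp [hk]
  · intro h; exact absurd (Finset.mem_Icc.mpr ⟨h1, h2⟩) h

lemma sumA_coeff (c : ℕ → ℤ) (hc : ∀ k, ¬(1 ≤ k ∧ k ≤ n) → c k = 0)
    (k : ℕ) (h1 : 1 ≤ k) (h2 : k ≤ n) :
    coeffW n (sumA n c) k = 2 * c k - c (k - 1) - c (k + 1) := by
  unfold sumA
  rw [coeffW_finsum]
  have step : ∀ j ∈ Finset.Icc 1 n, coeffW n (c j • alphaW n j) k =
      2 * (if j = k then c j else 0) - (if j = k + 1 then c j else 0)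
        - (if j = k - 1 then c j else 0) := by
    intro j hj
    rw [coeffW_smul, coeff_alpha j k h1 h2]
    split_ifs <;> try ring1
    all_goals (exfalso; omega)
  rw [Finset.sum_congr rfl step]
  rw [Finset.sum_sub_distrib, Finset.sum_sub_distrib, ← Finset.mul_sum]
  rw [Finset.sum_ite_eq' (Finset.Icc 1 n) k c,
      Finset.sum_ite_eq' (Finset.Icc 1 n) (k+1) c,
      Finset.sum_ite_eq' (Finset.Icc 1 n) (k-1) c]
  rw [if_pos (Finset.mem_Icc.mpr ⟨h1, h2⟩)]
  have ek1 : (if k + 1 ∈ Finset.Icc 1 n then c (k+1) else 0) = c (k+1) := by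
    split_ifs with h
    · rfl
    · rw [hc (k+1) (by rw [Finset.mem_Icc] at h; omega)]
  have ek2 : (if k - 1 ∈ Finset.Icc 1 n then c (k-1) else 0) = c (k-1) := by
    split_ifs with h
    · rfl
    · rw [hc (k-1) (by rw [Finset.mem_Icc] at h; omega)]
  rw [ek1, ek2]
  ring

lemma sumA_eq_zero (c : ℕ → ℤ) (hc : ∀ k, ¬(1 ≤ k ∧ k ≤ n) → c k = 0)
    (h : sumA n c = 0) : ∀ k, c k = 0 := by
  have hrec : ∀ k, 1 ≤ k → k ≤ n → 2 * c k - c (k - 1) - c (k + 1) = 0 := by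
    intro k h1 h2
    rw [← sumA_coeff c hc k h1 h2, h, coeffW_zero]
  have hlin : ∀ k, k ≤ n + 1 → c k = (k : ℤ) * c 1 := by
    intro k
    induction k using Nat.strong_induction_on with
    | _ k ih =>
      intro hk
      match k with
      | 0 => rw [hc 0 (by omega)]; simp
      | 1 => simp
      | (j + 2) =>
        have e1 := ih (j + 1) (by omega) (by omega)
        have e0 := ih j (by omega) (by omega)
        have hr := hrec (j + 1) (by omega) (by omega)
        have e : (j + 1) - 1 = j := by omega
        rw [e] at hr
        have e2 : (j : ℤ) + 1 + 1 = ((j + 2 : ℕ) : ℤ) := by push_cast; ring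
        push_cast at e1 e0 ⊢
        linarith
  have h1 : c 1 = 0 := by
    have hl := hlin (n + 1) (le_refl _)
    rw [hc (n + 1) (by omega)] at hl
    have hn : ((n : ℤ) + 1) ≠ 0 := by positivity
    have : ((n:ℤ) + 1) * c 1 = 0 := by push_cast at hl; linarith
    rcases mul_eq_zero.mp this with h | h
    · exact absurd h hn
    · exact h
  intro k
  by_cases hk : k ≤ n + 1
  · rw [hlin k hk, h1, mul_zero]
  · exact hc k (by omega)

lemma sumA_unique (c d : ℕ → ℤ) (hc : ∀ k, ¬(1 ≤ k ∧ k ≤ n) → c k = 0)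
    (hd : ∀ k, ¬(1 ≤ k ∧ k ≤ n) → d k = 0) (h : sumA n c = sumA n d) :
    ∀ k, c k = d k := by
  have key : sumA n (fun k => c k + (- d k)) = 0 := by
    have : sumA n (fun k => - d k) = - sumA n d := by
      unfold sumA
      rw [← Finset.sum_neg_distrib]
      exact Finset.sum_congr rfl (fun k _ => by rw [neg_smul])
    rw [sumA_add, this, h]; abel
  intro k
  have := sumA_eq_zero (fun k => c k + (- d k))
    (fun k hk => by show c k + - d k = 0; rw [hc k hk, hd k hk]; ring) key k
  linarith

lemma alphaSum_eq_sumA (m p : ℕ) (h1 : 1 ≤ m) (h2 : p ≤ n) :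
    alphaSumW n m p = sumA n (fun k => if m ≤ k ∧ k ≤ p then (1:ℤ) else 0) := by
  have step : ∀ k ∈ Finset.Icc 1 n,
      (if m ≤ k ∧ k ≤ p then (1:ℤ) else 0) • alphaW n k
        = if k ∈ Finset.Icc m p then alphaW n k else 0 := by
    intro k _
    simp only [Finset.mem_Icc]
    split_ifs <;> simp
  have key : sumA n (fun k => if m ≤ k ∧ k ≤ p then (1:ℤ) else 0)
      = ∑ k ∈ Finset.Icc 1 n ∩ Finset.Icc m p, alphaW n k := by
    unfold sumA
    rw [Finset.sum_congr rfl step, Finset.sum_ite_mem]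
  rw [key, Finset.inter_eq_right.mpr (fun k hk => by
    rw [Finset.mem_Icc] at *; omega)]
  rfl

lemma coeff_aS {m p : ℕ} (hm1 : 1 ≤ m) (hmp : m < p) (hpn : p ≤ n) (k : ℕ) :
    coeffW n (alphaSumW n m p) k =
      if k = m ∨ k = p then 1
      else if (k = m - 1 ∧ 2 ≤ m) ∨ (k = p + 1 ∧ p + 1 ≤ n) then -1 else 0 := by
  rw [alphaSum_eq_sumA m p hm1 hpn]
  by_cases hk : 1 ≤ k ∧ k ≤ n
  · rw [sumA_coeff _ (fun j hj => by simp only [if_neg (by omega : ¬(m ≤ j ∧ j ≤ p))])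
      k hk.1 hk.2]
    split_ifs <;> omega
  · rw [coeffW_out _ _ hk]
    split_ifs <;> omega

end SigAux
namespace SigAux

def SS (n : ℕ) (l : Wt n) (q : ℕ) : ℤ := ∑ k ∈ Finset.Icc 1 q, coeffW n l k

lemma SS_sub (x y : Wt n) (q : ℕ) : SS n (x - y) q = SS n x q - SS n y q := by
  unfold SS
  rw [← Finset.sum_sub_distrib]
  exact Finset.sum_congr rfl (fun k _ => coeffW_sub x y k)

lemma coeff_bounds {l : Wt n} (hl : IsDomOne n l) (k : ℕ) :
    0 ≤ coeffW n l k ∧ coeffW n l k ≤ 1 := by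
  by_cases h : 1 ≤ k ∧ k ≤ n
  · rw [coeffW_eq l k h.1 h.2]; exact hl _
  · rw [coeffW_out l k h]; omega

lemma coeff_nonneg {l : Wt n} (hl : IsDomOne n l) (k : ℕ) : 0 ≤ coeffW n l k :=
  (coeff_bounds hl k).1

lemma domone_of_coeff {l : Wt n}
    (h : ∀ k, 1 ≤ k → k ≤ n → 0 ≤ coeffW n l k ∧ coeffW n l k ≤ 1) :
    IsDomOne n l := by
  intro i
  have := h ((i : ℕ) + 1) (by omega) (by omega)
  rwa [coeffW_fin l i] at this

lemma min_uniq {l : Wt n} {m m' : ℕ} (h : IsMinIdx n l m) (h' : IsMinIdx n l m') :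
    m = m' := by
  rcases lt_trichotomy m m' with hlt | he | hgt
  · have := h'.2 m hlt; have := h.1; omega
  · exact he
  · have := h.2 m' hgt; have := h'.1; omega

lemma min_facts {l : Wt n} {m : ℕ} (hl : IsDomOne n l) (hm : IsMinIdx n l m) :
    1 ≤ m ∧ m ≤ n ∧ coeffW n l m = 1 := by
  have h1 := hm.1
  have hr : 1 ≤ m ∧ m ≤ n := coeff_ne_range (l := l) (by omega)
  have hb := coeff_bounds hl m
  exact ⟨hr.1, hr.2, by omega⟩

lemma SS_eq_zero_of_lt {l : Wt n} {m : ℕ} (hm : IsMinIdx n l m) {q : ℕ} (hq : q < m) :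
    SS n l q = 0 := by
  unfold SS
  apply Finset.sum_eq_zero
  intro k hk
  rw [Finset.mem_Icc] at hk
  exact hm.2 k (by omega)

lemma SS_ge_one {l : Wt n} {m : ℕ} (hl : IsDomOne n l) (hm : IsMinIdx n l m)
    {q : ℕ} (hq : m ≤ q) : 1 ≤ SS n l q := by
  obtain ⟨hm1, hm2, hm3⟩ := min_facts hl hm
  have hsingle : coeffW n l m ≤ SS n l q := by
    apply Finset.single_le_sum (f := fun k => coeffW n l k)
    · intro k _; exact coeff_nonneg hl k
    · rw [Finset.mem_Icc]; omega
  omega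

lemma SS_omega {m : ℕ} (h1 : 1 ≤ m) (h2 : m ≤ n) (q : ℕ) :
    SS n (omegaW n m) q = if m ≤ q then 1 else 0 := by
  unfold SS
  have step : ∀ k ∈ Finset.Icc 1 q, coeffW n (omegaW n m) k
      = if k = m then (1:ℤ) else 0 := by
    intro k _
    rw [coeff_omega]
    split_ifs <;> first | rfl | omega
  rw [Finset.sum_congr rfl step, Finset.sum_ite_eq' (Finset.Icc 1 q) m (fun _ => (1:ℤ))]
  simp only [Finset.mem_Icc]
  split_ifs <;> first | rfl | omega

lemma SS_eq_one {l : Wt n} {m : ℕ} (hl : IsDomOne n l) (hm : IsMinIdx n l m)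
    {q : ℕ} (hq : m ≤ q) (hq1 : SS n l q ≤ 1) : SS n l q = 1 := by
  have := SS_ge_one hl hm hq
  omega

lemma sum_ite_le_one (s : Finset ℕ) (a : ℕ) (C : Prop) [Decidable C] :
    (∑ k ∈ s, if k = a ∧ C then (1:ℤ) else 0) ≤ 1 := by
  have hb : ∀ k ∈ s, (if k = a ∧ C then (1:ℤ) else 0) ≤ (if k = a then (1:ℤ) else 0) := by
    intro k _
    split_ifs <;> first | omega | (exfalso; tauto)
  calc (∑ k ∈ s, if k = a ∧ C then (1:ℤ) else 0)
      ≤ ∑ k ∈ s, (if k = a then (1:ℤ) else 0) := Finset.sum_le_sum hb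
    _ ≤ 1 := by
        rw [Finset.sum_ite_eq' s a (fun _ => (1:ℤ))]
        split_ifs <;> omega

def TT (n : ℕ) (l : Wt n) : ℤ := ∑ i : Fin n, ((i : ℤ) + 1) * ((n : ℤ) - (i : ℤ)) * l i

lemma TT_sub (x y : Wt n) : TT n (x - y) = TT n x - TT n y := by
  unfold TT
  rw [← Finset.sum_sub_distrib]
  apply Finset.sum_congr rfl
  intro i _
  have : (x - y) i = x i - y i := rfl
  rw [this]; ring

lemma TT_nonneg {l : Wt n} (hl : IsDomOne n l) : 0 ≤ TT n l := by
  unfold TT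
  apply Finset.sum_nonneg
  intro i _
  have h1 : (0:ℤ) ≤ (i:ℤ) + 1 := by positivity
  have h2 : (0:ℤ) ≤ (n:ℤ) - (i:ℤ) := by
    have := i.isLt
    have : (i:ℤ) < n := by exact_mod_cast this
    omega
  have := (hl i).1
  positivity

lemma TT_finsum {α : Type*} (s : Finset α) (f : α → Wt n) :
    TT n (∑ j ∈ s, f j) = ∑ j ∈ s, TT n (f j) := by
  classical
  induction s using Finset.cons_induction with
  | empty => simp [TT]
  | cons a s ha ih =>
    rw [Finset.sum_cons, Finset.sum_cons, ← ih]
    unfold TT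
    rw [← Finset.sum_add_distrib]
    apply Finset.sum_congr rfl
    intro i _
    have : (f a + ∑ j ∈ s, f j) i = f a i + (∑ j ∈ s, f j) i := rfl
    rw [this]; ring

lemma TT_omega {m : ℕ} (h1 : 1 ≤ m) (h2 : m ≤ n) :
    TT n (omegaW n m) = (m : ℤ) * ((n : ℤ) + 1 - (m : ℤ)) := by
  unfold TT
  rw [Finset.sum_eq_single (⟨m - 1, by omega⟩ : Fin n)]
  · have e1 : ((⟨m - 1, by omega⟩ : Fin n) : ℕ) = m - 1 := rfl
    have e2 : omegaW n m ⟨m - 1, by omega⟩ = 1 := by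
      unfold omegaW
      rw [if_pos (by simp [e1]; omega)]
    rw [e2, e1]
    have : ((m - 1 : ℕ) : ℤ) = (m : ℤ) - 1 := by omega
    rw [this]; ring
  · intro j _ hj
    have : omegaW n m j = 0 := by
      unfold omegaW
      rw [if_neg]
      intro h
      apply hj
      apply Fin.ext
      simp only []
      omega
    rw [this]; ring
  · intro h; exact absurd (Finset.mem_univ _) h

lemma TT_alpha {k : ℕ} (h1 : 1 ≤ k) (h2 : k ≤ n) : TT n (alphaW n k) = 2 := by
  unfold TT
  have step : ∀ i : Fin n, ((i : ℤ) + 1) * ((n : ℤ) - (i : ℤ)) * alphaW n k i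
      = 2 * (if (i:ℕ) = k - 1 then ((i : ℤ) + 1) * ((n : ℤ) - (i : ℤ)) else 0)
        - (if (i:ℕ) = k - 2 ∧ 2 ≤ k then ((i : ℤ) + 1) * ((n : ℤ) - (i : ℤ)) else 0)
        - (if (i:ℕ) = k then ((i : ℤ) + 1) * ((n : ℤ) - (i : ℤ)) else 0) := by
    intro i
    unfold alphaW
    split_ifs <;> try ring1
    all_goals (exfalso; omega)
  rw [Finset.sum_congr rfl (fun i _ => step i)]
  rw [Finset.sum_sub_distrib, Finset.sum_sub_distrib, ← Finset.mul_sum]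
  have hsum : ∀ (a : ℕ), (∑ i : Fin n, if (i:ℕ) = a then ((i : ℤ) + 1) * ((n : ℤ) - (i : ℤ)) else 0)
      = if a < n then ((a : ℤ) + 1) * ((n : ℤ) - (a : ℤ)) else 0 := by
    intro a
    by_cases ha : a < n
    · rw [Finset.sum_eq_single (⟨a, ha⟩ : Fin n)]
      · simp [ha]
      · intro j _ hj
        rw [if_neg (fun h => hj (Fin.ext h))]
      · intro h; exact absurd (Finset.mem_univ _) h
    · rw [if_neg ha]
      apply Finset.sum_eq_zero
      intro i _
      rw [if_neg (by have := i.isLt; omega)]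
  rw [hsum (k-1), hsum k]
  rw [if_pos (show k - 1 < n by omega)]
  have e1 : ((k - 1 : ℕ) : ℤ) = (k : ℤ) - 1 := by omega
  rw [e1]
  by_cases hk2 : 2 ≤ k
  · have hmid : (∑ x : Fin n, if (x:ℕ) = k - 2 ∧ 2 ≤ k then ((x : ℤ) + 1) * ((n : ℤ) - (x : ℤ)) else 0)
        = ((k : ℤ) - 2 + 1) * ((n : ℤ) - ((k:ℤ) - 2)) := by
      simp only [hk2, and_true]
      rw [hsum (k-2), if_pos (show k - 2 < n by omega)]
      have e2 : ((k - 2 : ℕ) : ℤ) = (k : ℤ) - 2 := by omega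
      rw [e2]
    rw [hmid]
    by_cases hkn : k < n
    · rw [if_pos hkn]; ring
    · rw [if_neg hkn]
      have hNK : (n:ℤ) = (k:ℤ) := by omega
      rw [hNK]; ring
  · have hmid : (∑ x : Fin n, if (x:ℕ) = k - 2 ∧ 2 ≤ k then ((x : ℤ) + 1) * ((n : ℤ) - (x : ℤ)) else 0)
        = 0 := by
      apply Finset.sum_eq_zero
      intro i _
      rw [if_neg (by omega)]
    rw [hmid]
    have hk : k = 1 := by omega
    subst hk
    by_cases hkn : 1 < n
    · rw [if_pos hkn]; push_cast; ring
    · rw [if_neg hkn]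
      have hNK : (n:ℤ) = 1 := by omega
      rw [hNK]; ring

lemma TT_alphaSum {m p : ℕ} (h1 : 1 ≤ m) (hmp : m ≤ p) (h2 : p ≤ n) :
    TT n (alphaSumW n m p) = 2 * ((p : ℤ) - (m : ℤ) + 1) := by
  unfold alphaSumW
  rw [TT_finsum]
  have step : ∀ k ∈ Finset.Icc m p, TT n (alphaW n k) = 2 := by
    intro k hk
    rw [Finset.mem_Icc] at hk
    exact TT_alpha (by omega) (by omega)
  rw [Finset.sum_congr rfl step, Finset.sum_const, Nat.card_Icc]
  have : ((p + 1 - m : ℕ) : ℤ) = (p:ℤ) - m + 1 := by omega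
  rw [nsmul_eq_mul, this]; ring

end SigAux
namespace SigAux

lemma TT_add (x y : Wt n) : TT n (x + y) = TT n x + TT n y := by
  unfold TT
  rw [← Finset.sum_add_distrib]
  apply Finset.sum_congr rfl
  intro i _
  have : (x + y) i = x i + y i := rfl
  rw [this]; ring

variable {l : Wt n} {m p : ℕ}

lemma coeff_sub_omega (hm1 : 1 ≤ m) (hmn : m ≤ n) (k : ℕ) :
    coeffW n (l - omegaW n m) k = coeffW n l k - (if k = m then 1 else 0) := by
  rw [coeffW_sub, coeff_omega]
  split_ifs <;> first | rfl | omega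

lemma domone_sub_omega (hd : IsDomOne n l) (hm : IsMinIdx n l m) :
    IsDomOne n (l - omegaW n m) := by
  obtain ⟨hm1, hmn, hcm⟩ := min_facts hd hm
  apply domone_of_coeff
  intro k hk1 hkn
  rw [coeff_sub_omega hm1 hmn]
  by_cases hkm : k = m
  · subst hkm; rw [if_pos rfl]; omega
  · rw [if_neg hkm]
    have := coeff_bounds hd k
    omega

lemma p_facts (hd : IsDomOne n l) (hm : IsMinIdx n l m)
    (hp : IsMinIdx n (l - omegaW n m) p) :
    m < p ∧ p ≤ n ∧ coeffW n l p = 1 ∧ ∀ k, k < p → k ≠ m → coeffW n l k = 0 := by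
  obtain ⟨hm1, hmn, hcm⟩ := min_facts hd hm
  have hLm := fun k => coeff_sub_omega (l := l) hm1 hmn k
  have hp1 := hp.1
  rw [hLm p] at hp1
  have hpm : p ≠ m := by
    intro he
    rw [if_pos he] at hp1
    rw [he] at hp1
    omega
  rw [if_neg hpm] at hp1
  have hrange := coeff_ne_range (l := l) (k := p) (by omega)
  have hb := coeff_bounds hd p
  have hmlt : m < p := by
    by_contra hc
    have h0 := hm.2 p (by omega)
    omega
  refine ⟨hmlt, hrange.2, by omega, ?_⟩
  intro k hk hkm
  have := hp.2 k hk
  rw [hLm k, if_neg hkm] at this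
  omega

section caseAB
variable (hd : IsDomOne n l) (hm : IsMinIdx n l m) (hp : IsMinIdx n (l - omegaW n m) p)

include hd hm hp

lemma coeff_lA (k : ℕ) :
    coeffW n (l - alphaSumW n m p) k = coeffW n l k -
      (if k = m ∨ k = p then 1
       else if (k = m - 1 ∧ 2 ≤ m) ∨ (k = p + 1 ∧ p + 1 ≤ n) then -1 else 0) := by
  obtain ⟨hm1, hmn, hcm⟩ := min_facts hd hm
  obtain ⟨hmp, hpn, hcp, hlow2⟩ := p_facts hd hm hp
  rw [coeffW_sub, coeff_aS hm1 hmp hpn]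

lemma domone_lA (h0 : coeffW n l (p + 1) = 0) :
    IsDomOne n (l - alphaSumW n m p) := by
  obtain ⟨hm1, hmn, hcm⟩ := min_facts hd hm
  obtain ⟨hmp, hpn, hcp, hlow2⟩ := p_facts hd hm hp
  apply domone_of_coeff
  intro k hk1 hkn
  rw [coeff_lA hd hm hp k]
  have hb := coeff_bounds hd k
  split_ifs with h h'
  · rcases h with h | h <;> subst h <;> omega
  · rcases h' with ⟨h', _⟩ | ⟨h', _⟩ <;> subst h'
    · have := hm.2 (m - 1) (by omega); omega
    · omega
  · omega

lemma coeff_lA_low (k : ℕ) (hk1 : 1 ≤ k) (hkm : k < m) :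
    coeffW n (l - alphaSumW n m p) k = if k = m - 1 ∧ 2 ≤ m then 1 else 0 := by
  obtain ⟨hm1, hmn, hcm⟩ := min_facts hd hm
  obtain ⟨hmp, hpn, hcp, hlow2⟩ := p_facts hd hm hp
  rw [coeff_lA hd hm hp k]
  have hz := hm.2 k hkm
  rw [if_neg (by omega)]
  split_ifs <;> omega

lemma SS_lA_le (q : ℕ) (hq : q < m) : SS n (l - alphaSumW n m p) q ≤ 1 := by
  unfold SS
  have step : ∀ k ∈ Finset.Icc 1 q, coeffW n (l - alphaSumW n m p) k
      = if k = m - 1 ∧ 2 ≤ m then (1:ℤ) else 0 := by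
    intro k hk
    rw [Finset.mem_Icc] at hk
    exact coeff_lA_low hd hm hp k hk.1 (by omega)
  rw [Finset.sum_congr rfl step]
  exact sum_ite_le_one _ _ _

variable (h1 : coeffW n l (p + 1) = 1)
include h1

lemma coeff_lB (k : ℕ) :
    coeffW n (l - 2 • omegaW n (p + 1) - alphaSumW n m p) k = coeffW n l k -
      (if k = p + 1 then 2 else 0) -
      (if k = m ∨ k = p then 1
       else if (k = m - 1 ∧ 2 ≤ m) ∨ (k = p + 1 ∧ p + 1 ≤ n) then -1 else 0) := by
  obtain ⟨hm1, hmn, hcm⟩ := min_facts hd hm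
  obtain ⟨hmp, hpn, hcp, hlow2⟩ := p_facts hd hm hp
  have hpn1 : p + 1 ≤ n := (coeff_ne_range (l := l) (k := p+1) (by omega)).2
  have h2 : (2 : ℕ) • omegaW n (p+1) = omegaW n (p+1) + omegaW n (p+1) := two_nsmul _
  rw [coeffW_sub, coeffW_sub, h2, coeffW_add, coeff_aS hm1 hmp hpn, coeff_omega]
  split_ifs <;> first | ring1 | (exfalso; omega)

lemma domone_lB : IsDomOne n (l - 2 • omegaW n (p + 1) - alphaSumW n m p) := by
  obtain ⟨hm1, hmn, hcm⟩ := min_facts hd hm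
  obtain ⟨hmp, hpn, hcp, hlow2⟩ := p_facts hd hm hp
  have hpn1 : p + 1 ≤ n := (coeff_ne_range (l := l) (k := p+1) (by omega)).2
  apply domone_of_coeff
  intro k hk1 hkn
  rw [coeff_lB hd hm hp h1 k]
  have hb := coeff_bounds hd k
  by_cases hkp1 : k = p + 1
  · subst hkp1
    rw [if_pos rfl, if_neg (by omega), if_pos (by omega)]
    omega
  · rw [if_neg hkp1]
    split_ifs with h h'
    · rcases h with h | h <;> subst h <;> omega
    · rcases h' with ⟨h', _⟩ | ⟨h', _⟩ <;> subst h'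
      · have := hm.2 (m - 1) (by omega); omega
      · omega
    · omega

lemma coeff_lB_low (k : ℕ) (hk1 : 1 ≤ k) (hkp : k ≤ p + 1) :
    coeffW n (l - 2 • omegaW n (p + 1) - alphaSumW n m p) k
      = if k = m - 1 ∧ 2 ≤ m then 1 else 0 := by
  obtain ⟨hm1, hmn, hcm⟩ := min_facts hd hm
  obtain ⟨hmp, hpn, hcp, hlow2⟩ := p_facts hd hm hp
  have hpn1 : p + 1 ≤ n := (coeff_ne_range (l := l) (k := p+1) (by omega)).2
  rw [coeff_lB hd hm hp h1 k]
  by_cases hkp1 : k = p + 1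
  · subst hkp1
    rw [if_pos rfl, if_neg (by omega), if_pos (by omega), if_neg (by omega)]
    omega
  · rw [if_neg hkp1]
    by_cases hkm : k < m
    · have hz := hm.2 k hkm
      rw [if_neg (by omega)]
      split_ifs <;> omega
    · -- m ≤ k ≤ p
      have hk : m ≤ k ∧ k ≤ p := by omega
      by_cases hke : k = m ∨ k = p
      · rw [if_pos hke, if_neg (by omega)]
        rcases hke with h | h <;> subst h <;> omega
      · rw [if_neg hke, if_neg (by omega), if_neg (by omega)]
        have := hlow2 k (by omega) (by omega)
        omega

lemma SS_lB_le (q : ℕ) (hq : q ≤ p + 1) :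
    SS n (l - 2 • omegaW n (p + 1) - alphaSumW n m p) q ≤ 1 := by
  unfold SS
  have step : ∀ k ∈ Finset.Icc 1 q, coeffW n (l - 2 • omegaW n (p + 1) - alphaSumW n m p) k
      = if k = m - 1 ∧ 2 ≤ m then (1:ℤ) else 0 := by
    intro k hk
    rw [Finset.mem_Icc] at hk
    exact coeff_lB_low hd hm hp h1 k hk.1 (by omega)
  rw [Finset.sum_congr rfl step]
  exact sum_ite_le_one _ _ _

end caseAB

lemma TT_lt_omega (hd : IsDomOne n l) (hm : IsMinIdx n l m) :
    TT n (l - omegaW n m) < TT n l := by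
  obtain ⟨hm1, hmn, hcm⟩ := min_facts hd hm
  rw [TT_sub, TT_omega hm1 hmn]
  have h1 : (0:ℤ) < (m:ℤ) := by exact_mod_cast hm1
  have h2 : (0:ℤ) < (n:ℤ) + 1 - (m:ℤ) := by
    have : (m:ℤ) ≤ (n:ℤ) := by exact_mod_cast hmn
    omega
  nlinarith

lemma TT_lt_A (hd : IsDomOne n l) (hm : IsMinIdx n l m)
    (hp : IsMinIdx n (l - omegaW n m) p) :
    TT n (l - alphaSumW n m p) < TT n l := by
  obtain ⟨hm1, hmn, hcm⟩ := min_facts hd hm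
  obtain ⟨hmp, hpn, hcp, hlow2⟩ := p_facts hd hm hp
  rw [TT_sub, TT_alphaSum hm1 (le_of_lt hmp) hpn]
  have : (m:ℤ) < (p:ℤ) := by exact_mod_cast hmp
  omega

lemma TT_lt_B (hd : IsDomOne n l) (hm : IsMinIdx n l m)
    (hp : IsMinIdx n (l - omegaW n m) p) (h1 : coeffW n l (p + 1) = 1) :
    TT n (l - 2 • omegaW n (p + 1) - alphaSumW n m p) < TT n l := by
  obtain ⟨hm1, hmn, hcm⟩ := min_facts hd hm
  obtain ⟨hmp, hpn, hcp, hlow2⟩ := p_facts hd hm hp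
  have hpn1 : p + 1 ≤ n := (coeff_ne_range (l := l) (k := p+1) (by omega)).2
  have h2 : (2 : ℕ) • omegaW n (p+1) = omegaW n (p+1) + omegaW n (p+1) := two_nsmul _
  rw [TT_sub, TT_sub, h2, TT_add, TT_omega (by omega) hpn1,
      TT_alphaSum hm1 (le_of_lt hmp) hpn]
  have c1 : (0:ℤ) < ((p:ℤ)+1) := by positivity
  have c2 : (0:ℤ) < (n:ℤ) + 1 - ((p:ℤ)+1) := by
    have : ((p:ℤ)+1) ≤ (n:ℤ) := by exact_mod_cast hpn1
    omega
  have c3 : (m:ℤ) < (p:ℤ) := by exact_mod_cast hmp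
  have key : (0:ℤ) < ((p:ℤ)+1) * ((n:ℤ) + 1 - ((p:ℤ)+1)) := mul_pos c1 c2
  push_cast
  push_cast at key
  nlinarith [key]

end SigAux
namespace SigAux

lemma sig0_inv {s : ℕ} {l μ : Wt n} (h : Sig0 n s l μ) :
    (s = 0 ∧ μ = l) ∨
    ∃ m mu, 0 < s ∧ IsMinIdx n l m ∧ μ = omegaW n m + mu ∧
      (Sig0 n s (l - omegaW n m) mu ∨ Sig1 n s (l - omegaW n m) mu) := by
  cases h with
  | base => exact Or.inl ⟨rfl, rfl⟩
  | step0 s m l mu hs hht hm hsub => exact Or.inr ⟨m, mu, hs, hm, rfl, Or.inl hsub⟩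
  | step1 s m l mu hs hht hm hsub => exact Or.inr ⟨m, mu, hs, hm, rfl, Or.inr hsub⟩

lemma sig1_inv {s : ℕ} {l μ : Wt n} (h : Sig1 n s l μ) :
    ∃ m p, IsMinIdx n l m ∧ IsMinIdx n (l - omegaW n m) p ∧
      ((∃ t, s = t + 1 ∧ coeffW n l (p+1) = 0 ∧ Sig0 n t (l - alphaSumW n m p) μ) ∨
       (s = 1 ∧ coeffW n l (p+1) = 1 ∧ μ = l - alphaSumW n m p) ∨
       (∃ t mu, s = t + 2 ∧ coeffW n l (p+1) = 1 ∧ μ = 2 • omegaW n (p+1) + mu ∧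
         Sig0 n (t+1) (l - 2 • omegaW n (p+1) - alphaSumW n m p) mu) ∨
       (∃ t mu, s = t + 2 ∧ coeffW n l (p+1) = 1 ∧
         μ = 2 • omegaW n (p+1) - alphaW n (p+1) + mu ∧
         Sig0 n t (l - 2 • omegaW n (p+1) - alphaSumW n m p) mu)) := by
  cases h with
  | caseA s m p l mu hht hm hp h0 hsub =>
    exact ⟨m, p, hm, hp, Or.inl ⟨s, rfl, h0, hsub⟩⟩
  | caseB1 m p l hht hm hp h1 =>
    exact ⟨m, p, hm, hp, Or.inr (Or.inl ⟨rfl, h1, rfl⟩)⟩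
  | caseB2 s m p l mu hht hm hp h1 hsub =>
    exact ⟨m, p, hm, hp, Or.inr (Or.inr (Or.inl ⟨s, mu, rfl, h1, rfl, hsub⟩))⟩
  | caseB3 s m p l mu hht hm hp h1 hsub =>
    exact ⟨m, p, hm, hp, Or.inr (Or.inr (Or.inr ⟨s, mu, rfl, h1, rfl, hsub⟩))⟩

def K0P (n : ℕ) (l : Wt n) : Prop := ∀ s μ, Sig0 n s l μ → ∃ c : ℕ → ℤ,
  l - μ = sumA n c ∧ (∀ k, ¬(1 ≤ k ∧ k ≤ n) → c k = 0) ∧ (∀ k, 0 ≤ c k) ∧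
  ∀ q, SS n l q ≤ 1 → c q = 0

def K1P (n : ℕ) (l : Wt n) : Prop := ∀ s μ, Sig1 n s l μ → ∃ c : ℕ → ℤ,
  l - μ = sumA n c ∧ (∀ k, ¬(1 ≤ k ∧ k ≤ n) → c k = 0) ∧ (∀ k, 0 ≤ c k) ∧
  (∀ q, SS n l q ≤ 0 → c q = 0) ∧ ∃ m, IsMinIdx n l m ∧ 1 ≤ c m

def C1P (n : ℕ) (l : Wt n) : Prop := ∀ s s' μ, Sig0 n s l μ → Sig0 n s' l μ → s = s'
def C2P (n : ℕ) (l : Wt n) : Prop := ∀ s s' μ, Sig1 n s l μ → Sig1 n s' l μ → s = s'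
def C3P (n : ℕ) (l : Wt n) : Prop := ∀ s s' μ, Sig0 n s l μ → Sig1 n s' l μ → False

end SigAux
namespace SigAux

theorem main (N : ℕ) : ∀ l : Wt n, (TT n l).toNat ≤ N → IsDomOne n l →
    (K0P n l ∧ K1P n l) ∧ (C3P n l ∧ C1P n l ∧ C2P n l) := by
  induction N using Nat.strong_induction_on with
  | _ N IH =>
  intro l hN hd
  have IH' : ∀ l' : Wt n, TT n l' < TT n l → IsDomOne n l' →
      (K0P n l' ∧ K1P n l') ∧ (C3P n l' ∧ C1P n l' ∧ C2P n l') := by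
    intro l' hlt hd'
    have h0 := TT_nonneg hd'
    exact IH (TT n l').toNat (by omega) l' (le_refl _) hd'
  have hK0 : K0P n l := by
    intro s μ h
    rcases sig0_inv h with ⟨hs0, hμ⟩ | ⟨m, mu, hs, hm, hμ, hsub⟩
    · subst hμ
      exact ⟨fun _ => 0, by rw [sumA_zero]; exact sub_self _, fun _ _ => rfl,
        fun _ => le_refl 0, fun _ _ => rfl⟩
    · subst hμ
      obtain ⟨hm1, hmn, hcm⟩ := min_facts hd hm
      have hd' := domone_sub_omega hd hm
      have hTT := TT_lt_omega hd hm
      obtain ⟨⟨hK0', hK1'⟩, -⟩ := IH' _ hTT hd'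
      have hSS : ∀ q, SS n l q ≤ 1 → SS n (l - omegaW n m) q ≤ 0 := by
        intro q hq
        rw [SS_sub, SS_omega hm1 hmn]
        by_cases hqm : q < m
        · rw [if_neg (by omega), SS_eq_zero_of_lt hm hqm]; omega
        · have := SS_ge_one hd hm (by omega : m ≤ q)
          rw [if_pos (by omega)]; omega
      have key : ∃ c : ℕ → ℤ, (l - omegaW n m) - mu = sumA n c ∧
          (∀ k, ¬(1 ≤ k ∧ k ≤ n) → c k = 0) ∧ (∀ k, 0 ≤ c k) ∧
          (∀ q, SS n (l - omegaW n m) q ≤ 0 → c q = 0) := by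
        rcases hsub with hsub | hsub
        · obtain ⟨c, h1, h2, h3, h4⟩ := hK0' _ _ hsub
          exact ⟨c, h1, h2, h3, fun q hq => h4 q (by omega)⟩
        · obtain ⟨c, h1, h2, h3, h4, -⟩ := hK1' _ _ hsub
          exact ⟨c, h1, h2, h3, h4⟩
      obtain ⟨c, h1, h2, h3, h4⟩ := key
      refine ⟨c, ?_, h2, h3, ?_⟩
      · rw [← h1]; abel
      · intro q hq
        exact h4 q (hSS q hq)
  have hK1 : K1P n l := by
    intro s μ h
    obtain ⟨m, p, hm, hp, hcases⟩ := sig1_inv h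
    obtain ⟨hm1, hmn, hcm⟩ := min_facts hd hm
    obtain ⟨hmp, hpn, hcp, hlow2⟩ := p_facts hd hm hp
    rcases hcases with ⟨t, hst, h0, hsub⟩ | ⟨hst, h1, hμ⟩ |
      ⟨t, mu, hst, h1, hμ, hsub⟩ | ⟨t, mu, hst, h1, hμ, hsub⟩
    · -- case A
      have hdA := domone_lA hd hm hp h0
      have hTT := TT_lt_A hd hm hp
      obtain ⟨⟨hK0', -⟩, -⟩ := IH' _ hTT hdA
      obtain ⟨c, h1', h2', h3', h4'⟩ := hK0' _ _ hsub
      refine ⟨fun k => c k + (if m ≤ k ∧ k ≤ p then 1 else 0), ?_, ?_, ?_, ?_, ?_⟩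
      · rw [sumA_add, ← h1', ← alphaSum_eq_sumA m p hm1 hpn]; abel
      · intro k hk; beta_reduce; rw [h2' k hk, if_neg (by omega), add_zero]
      · intro k; beta_reduce; have := h3' k; split_ifs <;> omega
      · intro q hq
        have hqm : q < m := by
          by_contra hq'
          have := SS_ge_one hd hm (by omega : m ≤ q)
          omega
        beta_reduce
        rw [if_neg (by omega), add_zero]
        exact h4' q (SS_lA_le hd hm hp q hqm)
      · refine ⟨m, hm, ?_⟩
        beta_reduce
        have := h3' m
        rw [if_pos (⟨le_refl m, by omega⟩ : m ≤ m ∧ m ≤ p)]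
        omega
    · -- case B1
      subst hμ
      refine ⟨fun k => if m ≤ k ∧ k ≤ p then 1 else 0, ?_, ?_, ?_, ?_, ?_⟩
      · rw [← alphaSum_eq_sumA m p hm1 hpn]; abel
      · intro k hk; beta_reduce; rw [if_neg (by omega)]
      · intro k; beta_reduce; split_ifs <;> omega
      · intro q hq
        have hqm : q < m := by
          by_contra hq'
          have := SS_ge_one hd hm (by omega : m ≤ q)
          omega
        beta_reduce
        rw [if_neg (by omega)]
      · refine ⟨m, hm, ?_⟩
        beta_reduce
        rw [if_pos (⟨le_refl m, by omega⟩ : m ≤ m ∧ m ≤ p)]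
    · -- case B2
      subst hμ
      have hpn1 : p + 1 ≤ n := (coeff_ne_range (l := l) (k := p+1) (by omega)).2
      have hdB := domone_lB hd hm hp h1
      have hTT := TT_lt_B hd hm hp h1
      obtain ⟨⟨hK0', -⟩, -⟩ := IH' _ hTT hdB
      obtain ⟨c, h1', h2', h3', h4'⟩ := hK0' _ _ hsub
      refine ⟨fun k => c k + (if m ≤ k ∧ k ≤ p then 1 else 0), ?_, ?_, ?_, ?_, ?_⟩
      · rw [sumA_add, ← h1', ← alphaSum_eq_sumA m p hm1 hpn]; abel
      · intro k hk; beta_reduce; rw [h2' k hk, if_neg (by omega), add_zero]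
      · intro k; beta_reduce; have := h3' k; split_ifs <;> omega
      · intro q hq
        have hqm : q < m := by
          by_contra hq'
          have := SS_ge_one hd hm (by omega : m ≤ q)
          omega
        beta_reduce
        rw [if_neg (by omega), add_zero]
        exact h4' q (SS_lB_le hd hm hp h1 q (by omega))
      · refine ⟨m, hm, ?_⟩
        beta_reduce
        have := h3' m
        rw [if_pos (⟨le_refl m, by omega⟩ : m ≤ m ∧ m ≤ p)]
        omega
    · -- case B3
      subst hμ
      have hpn1 : p + 1 ≤ n := (coeff_ne_range (l := l) (k := p+1) (by omega)).2
      have hdB := domone_lB hd hm hp h1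
      have hTT := TT_lt_B hd hm hp h1
      obtain ⟨⟨hK0', -⟩, -⟩ := IH' _ hTT hdB
      obtain ⟨c, h1', h2', h3', h4'⟩ := hK0' _ _ hsub
      refine ⟨fun k => c k + (if m ≤ k ∧ k ≤ p then 1 else 0) +
        (if k = p + 1 then 1 else 0), ?_, ?_, ?_, ?_, ?_⟩
      · rw [sumA_add, sumA_add, ← h1', ← alphaSum_eq_sumA m p hm1 hpn,
          sumA_single (p+1) (by omega) hpn1]
        abel
      · intro k hk
        beta_reduce
        rw [h2' k hk, if_neg (by omega), if_neg (by omega)]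
        ring
      · intro k; beta_reduce; have := h3' k; split_ifs <;> omega
      · intro q hq
        have hqm : q < m := by
          by_contra hq'
          have := SS_ge_one hd hm (by omega : m ≤ q)
          omega
        beta_reduce
        rw [if_neg (by omega), if_neg (by omega), add_zero, add_zero]
        exact h4' q (SS_lB_le hd hm hp h1 q (by omega))
      · refine ⟨m, hm, ?_⟩
        beta_reduce
        have := h3' m
        rw [if_pos (⟨le_refl m, by omega⟩ : m ≤ m ∧ m ≤ p), if_neg (by omega)]
        omega
  have hC3 : C3P n l := by
    intro s s' μ h0 h1
    obtain ⟨c, hceq, hcout, -, hcS⟩ := hK0 _ _ h0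
    obtain ⟨c', hceq', hcout', -, -, m, hm, hcm'⟩ := hK1 _ _ h1
    obtain ⟨hm1, hmn, hcmv⟩ := min_facts hd hm
    have hequ := sumA_unique c c' hcout hcout' (by rw [← hceq, ← hceq'])
    have hSm : SS n l m ≤ 1 := by
      have he : SS n l m = coeffW n l m := by
        unfold SS
        rw [Finset.sum_eq_single m
          (fun k hk hkm => hm.2 k (by rw [Finset.mem_Icc] at hk; omega))
          (fun hmem => absurd (Finset.mem_Icc.mpr ⟨hm1, le_refl m⟩) hmem)]
      omega
    have h5 := hcS m hSm
    have h6 := hequ m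
    omega
  have hC1 : C1P n l := by
    have noId : ∀ l' : Wt n, TT n l' < TT n l → IsDomOne n l' →
        (∀ t, 0 < t → Sig0 n t l' l' → False) ∧ (∀ t, Sig1 n t l' l' → False) := by
      intro l' hlt hd'
      obtain ⟨⟨hK0', hK1'⟩, -, hC1', -⟩ := IH' l' hlt hd'
      constructor
      · intro t ht hder
        have := hC1' 0 t l' (Sig0.base l') hder
        omega
      · intro t hder
        obtain ⟨c, hceq, hcout, -, -, m', hm', hcm'⟩ := hK1' _ _ hder
        have h0 : sumA n c = 0 := by rw [← hceq]; exact sub_self _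
        have := sumA_eq_zero c hcout h0 m'
        omega
    intro s s' μ h h'
    rcases sig0_inv h with ⟨hs0, hμ⟩ | ⟨m, mu, hs, hm, hμ, hsub⟩ <;>
      rcases sig0_inv h' with ⟨hs0', hμ'⟩ | ⟨m', mu', hs', hm', hμ', hsub'⟩
    · omega
    · exfalso
      rw [hμ] at hμ'
      have hmu' : mu' = l - omegaW n m' := by rw [hμ']; abel
      have hd' := domone_sub_omega hd hm'
      have hTT := TT_lt_omega hd hm'
      rcases hsub' with hsub' | hsub'
      · rw [hmu'] at hsub'; exact (noId _ hTT hd').1 s' hs' hsub'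
      · rw [hmu'] at hsub'; exact (noId _ hTT hd').2 s' hsub'
    · exfalso
      rw [hμ'] at hμ
      have hmu : mu = l - omegaW n m := by rw [hμ]; abel
      have hd' := domone_sub_omega hd hm
      have hTT := TT_lt_omega hd hm
      rcases hsub with hsub | hsub
      · rw [hmu] at hsub; exact (noId _ hTT hd').1 s hs hsub
      · rw [hmu] at hsub; exact (noId _ hTT hd').2 s hsub
    · have hmm := min_uniq hm hm'
      subst hmm
      have heq : omegaW n m + mu = omegaW n m + mu' := by rw [← hμ, ← hμ']
      have hmu := add_left_cancel heq
      subst hmu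
      have hd' := domone_sub_omega hd hm
      have hTT := TT_lt_omega hd hm
      obtain ⟨⟨hK0', hK1'⟩, hC3', hC1', hC2'⟩ := IH' _ hTT hd'
      rcases hsub with hsub | hsub <;> rcases hsub' with hsub' | hsub'
      · exact hC1' _ _ _ hsub hsub'
      · exact (hC3' _ _ _ hsub hsub').elim
      · exact (hC3' _ _ _ hsub' hsub).elim
      · exact hC2' _ _ _ hsub hsub'
  have hC2 : C2P n l := by
    intro s s' μ h h'
    obtain ⟨m, p, hm, hp, hc⟩ := sig1_inv h
    obtain ⟨m', p', hm', hp', hc'⟩ := sig1_inv h'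
    have hmm := min_uniq hm hm'
    subst hmm
    have hpp := min_uniq hp hp'
    subst hpp
    obtain ⟨hm1, hmn, hcm⟩ := min_facts hd hm
    obtain ⟨hmp, hpn, hcp, hlow2⟩ := p_facts hd hm hp
    rcases hc with ⟨t, hst, h0, hsub⟩ | ⟨hst, h1, hμ⟩ |
      ⟨t, mu, hst, h1, hμ, hsub⟩ | ⟨t, mu, hst, h1, hμ, hsub⟩ <;>
      rcases hc' with ⟨t', hst', h0', hsub'⟩ | ⟨hst', h1', hμ'⟩ |
        ⟨t', mu', hst', h1', hμ', hsub'⟩ | ⟨t', mu', hst', h1', hμ', hsub'⟩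
    · -- A A
      have hdA := domone_lA hd hm hp h0
      obtain ⟨-, -, hC1', -⟩ := IH' _ (TT_lt_A hd hm hp) hdA
      have := hC1' _ _ _ hsub hsub'
      omega
    · omega
    · omega
    · omega
    · omega
    · omega
    · -- B1 B2
      exfalso
      rw [hμ] at hμ'
      have hmu' : mu' = l - alphaSumW n m p - 2 • omegaW n (p+1) := by
        rw [hμ']; abel
      have e : l - alphaSumW n m p - 2 • omegaW n (p+1)
          = l - 2 • omegaW n (p+1) - alphaSumW n m p := by abel
      rw [hmu', e] at hsub'
      have hdB := domone_lB hd hm hp h1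
      obtain ⟨-, -, hC1', -⟩ := IH' _ (TT_lt_B hd hm hp h1) hdB
      have := hC1' 0 (t' + 1) _ (Sig0.base _) hsub'
      omega
    · -- B1 B3
      exfalso
      have hpn1 : p + 1 ≤ n := (coeff_ne_range (l := l) (k := p+1) (by omega)).2
      rw [hμ] at hμ'
      have hmu' : mu' = l - alphaSumW n m p - (2 • omegaW n (p+1) - alphaW n (p+1)) := by
        rw [hμ']; abel
      have hdB := domone_lB hd hm hp h1
      obtain ⟨⟨hK0', -⟩, -⟩ := IH' _ (TT_lt_B hd hm hp h1) hdB
      obtain ⟨c, hceq, hcout, hcnn, -⟩ := hK0' _ _ hsub'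
      have he : sumA n (fun k => c k + (if k = p + 1 then 1 else 0)) = 0 := by
        rw [sumA_add, sumA_single (p+1) (by omega) hpn1, ← hceq, hmu']
        abel
      have hz := sumA_eq_zero _ (fun k hk => by
        beta_reduce; rw [hcout k hk, if_neg (by omega)]; ring1) he (p+1)
      have := hcnn (p+1)
      simp at hz
      linarith
    · -- B2 A
      omega
    · -- B2 B1
      exfalso
      rw [hμ'] at hμ
      have hmu : mu = l - alphaSumW n m p - 2 • omegaW n (p+1) := by
        rw [hμ]; abel
      have e : l - alphaSumW n m p - 2 • omegaW n (p+1)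
          = l - 2 • omegaW n (p+1) - alphaSumW n m p := by abel
      rw [hmu, e] at hsub
      have hdB := domone_lB hd hm hp h1
      obtain ⟨-, -, hC1', -⟩ := IH' _ (TT_lt_B hd hm hp h1) hdB
      have := hC1' 0 (t + 1) _ (Sig0.base _) hsub
      omega
    · -- B2 B2
      have heq : 2 • omegaW n (p+1) + mu = 2 • omegaW n (p+1) + mu' := by
        rw [← hμ, ← hμ']
      have hmu := add_left_cancel heq
      subst hmu
      have hdB := domone_lB hd hm hp h1
      obtain ⟨-, -, hC1', -⟩ := IH' _ (TT_lt_B hd hm hp h1) hdB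
      have := hC1' _ _ _ hsub hsub'
      omega
    · -- B2 B3
      exfalso
      have hpn1 : p + 1 ≤ n := (coeff_ne_range (l := l) (k := p+1) (by omega)).2
      have hmu' : mu' = mu + alphaW n (p+1) := by
        have heq : 2 • omegaW n (p+1) + mu
            = 2 • omegaW n (p+1) - alphaW n (p+1) + mu' := by rw [← hμ, ← hμ']
        have : mu' = 2 • omegaW n (p+1) + mu - (2 • omegaW n (p+1) - alphaW n (p+1)) := by
          rw [heq]; abel
        rw [this]; abel
      have hdB := domone_lB hd hm hp h1
      obtain ⟨⟨hK0', -⟩, -⟩ := IH' _ (TT_lt_B hd hm hp h1) hdB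
      obtain ⟨ca, hceqa, hcouta, -, hcSa⟩ := hK0' _ _ hsub
      obtain ⟨cb, hceqb, hcoutb, hcnnb, -⟩ := hK0' _ _ hsub'
      have he : sumA n (fun k => cb k + (if k = p + 1 then 1 else 0)) = sumA n ca := by
        rw [sumA_add, sumA_single (p+1) (by omega) hpn1, ← hceqa, ← hceqb, hmu']
        abel
      have huniq := sumA_unique _ _ (fun k hk => by
        beta_reduce; rw [hcoutb k hk, if_neg (by omega)]; ring1) hcouta he (p+1)
      have hca := hcSa (p+1) (SS_lB_le hd hm hp h1 (p+1) (le_refl _))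
      have := hcnnb (p+1)
      simp at huniq
      linarith
    · omega
    · -- B3 B1
      exfalso
      have hpn1 : p + 1 ≤ n := (coeff_ne_range (l := l) (k := p+1) (by omega)).2
      rw [hμ'] at hμ
      have hmu : mu = l - alphaSumW n m p - (2 • omegaW n (p+1) - alphaW n (p+1)) := by
        rw [hμ]; abel
      have hdB := domone_lB hd hm hp h1
      obtain ⟨⟨hK0', -⟩, -⟩ := IH' _ (TT_lt_B hd hm hp h1) hdB
      obtain ⟨c, hceq, hcout, hcnn, -⟩ := hK0' _ _ hsub
      have he : sumA n (fun k => c k + (if k = p + 1 then 1 else 0)) = 0 := by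
        rw [sumA_add, sumA_single (p+1) (by omega) hpn1, ← hceq, hmu]
        abel
      have hz := sumA_eq_zero _ (fun k hk => by
        beta_reduce; rw [hcout k hk, if_neg (by omega)]; ring1) he (p+1)
      have := hcnn (p+1)
      simp at hz
      linarith
    · -- B3 B2
      exfalso
      have hpn1 : p + 1 ≤ n := (coeff_ne_range (l := l) (k := p+1) (by omega)).2
      have hmu : mu = mu' + alphaW n (p+1) := by
        have heq : 2 • omegaW n (p+1) + mu'
            = 2 • omegaW n (p+1) - alphaW n (p+1) + mu := by rw [← hμ', ← hμ]
        have : mu = 2 • omegaW n (p+1) + mu' - (2 • omegaW n (p+1) - alphaW n (p+1)) := by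
          rw [heq]; abel
        rw [this]; abel
      have hdB := domone_lB hd hm hp h1
      obtain ⟨⟨hK0', -⟩, -⟩ := IH' _ (TT_lt_B hd hm hp h1) hdB
      obtain ⟨ca, hceqa, hcouta, -, hcSa⟩ := hK0' _ _ hsub'
      obtain ⟨cb, hceqb, hcoutb, hcnnb, -⟩ := hK0' _ _ hsub
      have he : sumA n (fun k => cb k + (if k = p + 1 then 1 else 0)) = sumA n ca := by
        rw [sumA_add, sumA_single (p+1) (by omega) hpn1, ← hceqa, ← hceqb, hmu]
        abel
      have huniq := sumA_unique _ _ (fun k hk => by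
        beta_reduce; rw [hcoutb k hk, if_neg (by omega)]; ring1) hcouta he (p+1)
      have hca := hcSa (p+1) (SS_lB_le hd hm hp h1 (p+1) (le_refl _))
      have := hcnnb (p+1)
      simp at huniq
      linarith
    · -- B3 B3
      have heq : 2 • omegaW n (p+1) - alphaW n (p+1) + mu
          = 2 • omegaW n (p+1) - alphaW n (p+1) + mu' := by rw [← hμ, ← hμ']
      have hmu := add_left_cancel heq
      subst hmu
      have hdB := domone_lB hd hm hp h1
      obtain ⟨-, -, hC1', -⟩ := IH' _ (TT_lt_B hd hm hp h1) hdB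
      have := hC1' _ _ _ hsub hsub'
      omega
  exact ⟨⟨hK0, hK1⟩, hC3, hC1, hC2⟩

end SigAux

/-- the sets Σ_s^r(λ) are pairwise disjoint for distinct (s, r). -/
theorem sigma_disjoint (n : ℕ) (l : Wt n) (hl : IsDomOne n l) :
    (∀ s s' mu, Sig0 n s l mu → Sig0 n s' l mu → s = s') ∧
    (∀ s s' mu, Sig1 n s l mu → Sig1 n s' l mu → s = s') ∧
    (∀ s s' mu, Sig0 n s l mu → Sig1 n s' l mu → False) := by
  obtain ⟨⟨hK0, hK1⟩, hC3, hC1, hC2⟩ :=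
    SigAux.main (SigAux.TT n l).toNat l (le_refl _) hl
  exact ⟨hC1, hC2, hC3⟩
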